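/- Let A be an n×n pairwise comparison matrix (n ≥ 1), viewed as a complex matrix, and let ρ(A) denote its spectral radius (the maximum modulus of its complex eigenvalues). Then ρ(A) ≥ n, and ρ(A) = n if and only if A is consistent (i.e., a_ik = a_ij · a_jk for all i, j, k). Consequently Saaty's Consistency Index CI(A) = (ρ(A) − n)/(n − 1) is nonnegative for n ≥ 2 and vanishes exactly on consistent matrices. -/

import Mathlib

open Matrix Filter

/-- A pairwise comparison matrix: positive entries with `a_ij * a_ji = 1`. -/
def IsPCM {n : ℕ} (A : Matrix (Fin n) (Fin n) ℝ) : Prop :=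
  (∀ i j, 0 < A i j) ∧ (∀ i j, A i j * A j i = 1)

/-- A pairwise comparison matrix is consistent: `a_ik = a_ij · a_jk` for all `i, j, k`. -/
def IsConsistent {n : ℕ} (A : Matrix (Fin n) (Fin n) ℝ) : Prop :=
  ∀ i j k, A i k = A i j * A j k

/-- The spectral radius of a real matrix: the maximum modulus of its complex
eigenvalues. -/
noncomputable def specRad {n : ℕ} (A : Matrix (Fin n) (Fin n) ℝ) : ℝ :=
  sSup ((fun z : ℂ => ‖z‖) '' spectrum ℂ (A.map Complex.ofReal))

attribute [local instance] Matrix.linftyOpNormedRing Matrix.linftyOpNormedAlgebra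

local instance {n : ℕ} : CompleteSpace (Matrix (Fin n) (Fin n) ℂ) :=
  FiniteDimensional.complete ℂ _

lemma specRad_nonneg {n : ℕ} (M : Matrix (Fin n) (Fin n) ℝ) : 0 ≤ specRad M :=
  Real.sSup_nonneg (by rintro x ⟨μ, -, rfl⟩; exact norm_nonneg μ)

lemma bddAbove_abs_spectrum {n : ℕ} (hn : 1 ≤ n) (M : Matrix (Fin n) (Fin n) ℝ) :
    BddAbove ((fun z : ℂ => ‖z‖) '' spectrum ℂ (M.map Complex.ofReal)) := by
  haveI : Nonempty (Fin n) := Fin.pos_iff_nonempty.mp hn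
  exact ⟨‖M.map Complex.ofReal‖, by rintro x ⟨μ, hμ, rfl⟩; exact spectrum.norm_le_norm_of_mem hμ⟩

lemma abs_le_specRad {n : ℕ} (hn : 1 ≤ n) {M : Matrix (Fin n) (Fin n) ℝ} {μ : ℂ}
    (hμ : μ ∈ spectrum ℂ (M.map Complex.ofReal)) : ‖μ‖ ≤ specRad M :=
  le_csSup (bddAbove_abs_spectrum hn M) ⟨μ, hμ, rfl⟩

lemma map_mul_ofReal {n : ℕ} (M N : Matrix (Fin n) (Fin n) ℝ) :
    (M * N).map Complex.ofReal = (M.map Complex.ofReal) * (N.map Complex.ofReal) :=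
  (RingHom.mapMatrix (Complex.ofRealHom) : Matrix (Fin n) (Fin n) ℝ →+* _).map_mul M N

lemma map_pow_ofReal {n : ℕ} (M : Matrix (Fin n) (Fin n) ℝ) (k : ℕ) :
    (M ^ k).map Complex.ofReal = (M.map Complex.ofReal) ^ k :=
  ((RingHom.mapMatrix (Complex.ofRealHom) : Matrix (Fin n) (Fin n) ℝ →+* _).map_pow M k)

lemma row_le_specRad {n : ℕ} (hn : 1 ≤ n) (M : Matrix (Fin n) (Fin n) ℝ)
    (hpos : ∀ i j, 0 ≤ M i j) {r : ℝ} (hr : 0 ≤ r) (hrow : ∀ i, r ≤ ∑ j, M i j) :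
    r ≤ specRad M := by
  haveI : Nonempty (Fin n) := Fin.pos_iff_nonempty.mp hn
  set Mc := M.map Complex.ofReal with hMc
  have key : ∀ k : ℕ, (∀ i j, 0 ≤ (M ^ k) i j) ∧ (∀ i, r ^ k ≤ ∑ j, (M ^ k) i j) := by
    intro k
    induction k with
    | zero =>
      refine ⟨fun i j => ?_, fun i => ?_⟩
      · rw [pow_zero, Matrix.one_apply]
        split <;> norm_num
      · rw [pow_zero, pow_zero]
        have h1 : ∑ j, (1 : Matrix (Fin n) (Fin n) ℝ) i j = 1 := by
          simp [Matrix.one_apply]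
        rw [h1]
    | succ k ih =>
      obtain ⟨ih1, ih2⟩ := ih
      constructor
      · intro i j
        rw [pow_succ, Matrix.mul_apply]
        exact Finset.sum_nonneg fun l _ => mul_nonneg (ih1 i l) (hpos l j)
      · intro i
        rw [pow_succ]
        calc r ^ (k + 1) = r ^ k * r := by ring
        _ ≤ (∑ j, (M ^ k) i j) * r := mul_le_mul_of_nonneg_right (ih2 i) hr
        _ = ∑ l, (M ^ k) i l * r := by rw [Finset.sum_mul]
        _ ≤ ∑ l, (M ^ k) i l * (∑ j, M l j) :=
            Finset.sum_le_sum fun l _ => mul_le_mul_of_nonneg_left (hrow l) (ih1 i l)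
        _ = ∑ l, ∑ j, (M ^ k) i l * M l j := by simp_rw [Finset.mul_sum]
        _ = ∑ j, ((M ^ k) * M) i j := by
            rw [Finset.sum_comm]; simp_rw [Matrix.mul_apply]
  have hnorm : ∀ k : ℕ, r ^ k ≤ ‖Mc ^ k‖ := by
    intro k
    rw [← map_pow_ofReal]
    rw [Matrix.linfty_opNorm_def]
    obtain ⟨h1, h2⟩ := key k
    have i0 : Fin n := ⟨0, hn⟩
    calc r ^ k ≤ ∑ j, (M ^ k) i0 j := h2 i0
    _ = ((∑ j, ‖((M ^ k).map Complex.ofReal) i0 j‖₊ : NNReal) : ℝ) := by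
        push_cast
        refine Finset.sum_congr rfl fun j _ => ?_
        simp [Matrix.map_apply, Complex.norm_real, abs_of_nonneg (h1 i0 j)]
    _ ≤ _ := by
        exact_mod_cast NNReal.coe_le_coe.mpr
          (Finset.le_sup (f := fun i => ∑ j, ‖((M ^ k).map Complex.ofReal) i j‖₊)
            (Finset.mem_univ i0))
  have hlim := spectrum.pow_nnnorm_pow_one_div_tendsto_nhds_spectralRadius Mc
  have hge : ENNReal.ofReal r ≤ spectralRadius ℂ Mc := by
    refine ge_of_tendsto hlim ?_
    filter_upwards [eventually_ge_atTop 1] with k hk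
    have h1 : ENNReal.ofReal r ^ k ≤ (‖Mc ^ k‖₊ : ENNReal) := by
      rw [← ENNReal.ofReal_pow hr, ← enorm_eq_nnnorm, ← ofReal_norm]
      exact ENNReal.ofReal_le_ofReal (hnorm k)
    calc ENNReal.ofReal r = (ENNReal.ofReal r ^ k) ^ (1 / (k : ℝ)) := by
          rw [← ENNReal.rpow_natCast, ← ENNReal.rpow_mul]
          have hk' : (k:ℝ) ≠ 0 := by
            have : 0 < k := hk
            positivity
          rw [mul_one_div, div_self hk', ENNReal.rpow_one]
    _ ≤ (‖Mc ^ k‖₊ : ENNReal) ^ (1 / (k : ℝ)) :=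
          ENNReal.rpow_le_rpow h1 (by positivity)
  have hle : spectralRadius ℂ Mc ≤ ENNReal.ofReal (specRad M) := by
    rw [spectralRadius]
    refine iSup₂_le fun μ hμ => ?_
    rw [← enorm_eq_nnnorm, ← ofReal_norm]
    exact ENNReal.ofReal_le_ofReal (abs_le_specRad hn hμ)
  have := hge.trans hle
  rwa [ENNReal.ofReal_le_ofReal_iff (specRad_nonneg M)] at this

lemma specRad_mul_self_le {n : ℕ} (hn : 1 ≤ n) (M : Matrix (Fin n) (Fin n) ℝ) :
    specRad (M * M) ≤ specRad M ^ 2 := by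
  haveI : Nonempty (Fin n) := Fin.pos_iff_nonempty.mp hn
  set Mc := M.map Complex.ofReal with hMc
  have h2 : (M * M).map Complex.ofReal = Mc ^ 2 := by rw [map_mul_ofReal, sq]
  rw [specRad, h2, spectrum.map_pow Mc 2]
  have hne : (spectrum ℂ Mc).Nonempty := spectrum.nonempty Mc
  refine csSup_le ((hne.image (· ^ 2)).image (fun z : ℂ => ‖z‖)) ?_
  rintro x ⟨y, ⟨μ, hμ, rfl⟩, rfl⟩
  simp only [norm_pow]
  exact pow_le_pow_left₀ (norm_nonneg μ) (abs_le_specRad hn hμ) 2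

lemma specRad_diag_conj {n : ℕ} (A : Matrix (Fin n) (Fin n) ℝ) (d : Fin n → ℝ)
    (hd : ∀ i, d i ≠ 0) :
    specRad (Matrix.of fun i j => d i * A i j * (d j)⁻¹) = specRad A := by
  have hdc : ∀ i, (d i : ℂ) ≠ 0 := fun i => by exact_mod_cast hd i
  set u : (Matrix (Fin n) (Fin n) ℂ)ˣ :=
    { val := Matrix.diagonal fun i => (d i : ℂ)
      inv := Matrix.diagonal fun i => ((d i : ℂ))⁻¹
      val_inv := by rw [Matrix.diagonal_mul_diagonal]; simp [mul_inv_cancel₀, hdc]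
      inv_val := by rw [Matrix.diagonal_mul_diagonal]; simp [inv_mul_cancel₀, hdc] } with hu
  have key : (Matrix.of fun i j => d i * A i j * (d j)⁻¹).map Complex.ofReal
      = u * (A.map Complex.ofReal) * (u⁻¹ : _ˣ) := by
    ext i j
    simp [hu, Matrix.mul_apply, Matrix.diagonal, Matrix.map_apply, Finset.sum_ite_eq,
      Finset.sum_ite_eq']
  rw [specRad, key, spectrum.units_conjugate]
  rfl

lemma mem_spectrum_iff_det {n : ℕ} (N : Matrix (Fin n) (Fin n) ℂ) (μ : ℂ) :
    μ ∈ spectrum ℂ N ↔ (μ • (1 : Matrix (Fin n) (Fin n) ℂ) - N).det = 0 := by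
  rw [spectrum.mem_iff, Algebra.algebraMap_eq_smul_one, Matrix.isUnit_iff_isUnit_det,
    isUnit_iff_ne_zero, not_not]

/-- For an `n × n` pairwise comparison matrix `A` (`n ≥ 1`), the spectral radius
satisfies `ρ(A) ≥ n`, with equality exactly when `A` is consistent; consequently,
for `n ≥ 2`, Saaty's Consistency Index `CI(A) = (ρ(A) − n)/(n − 1)` is nonnegative
and vanishes exactly on consistent matrices. -/
theorem specRad_ge_and_CI_nonneg {n : ℕ} (hn : 1 ≤ n)
    (A : Matrix (Fin n) (Fin n) ℝ) (hA : IsPCM A) :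
    (n : ℝ) ≤ specRad A ∧
      (specRad A = n ↔ IsConsistent A) ∧
      (2 ≤ n →
        0 ≤ (specRad A - n) / ((n : ℝ) - 1) ∧
          ((specRad A - n) / ((n : ℝ) - 1) = 0 ↔ IsConsistent A)) := by
  obtain ⟨hpos, hrec⟩ := hA
  haveI hnem : Nonempty (Fin n) := Fin.pos_iff_nonempty.mp hn
  have hnR : (0:ℝ) < n := by exact_mod_cast hn
  -- log sums
  set s : Fin n → ℝ := fun i => ∑ k, Real.log (A i k) with hs
  have hStot : ∑ i, s i = 0 := by
    have h2 : ∑ i, ∑ j, Real.log (A j i) = ∑ i, s i := Finset.sum_comm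
    have h1 : (∑ i, s i) + (∑ i, s i) = 0 := by
      calc (∑ i, s i) + (∑ i, s i)
          = ∑ i, ∑ j, Real.log (A i j) + ∑ i, ∑ j, Real.log (A j i) := by rw [h2]
        _ = ∑ i, ∑ j, (Real.log (A i j) + Real.log (A j i)) := by
            rw [← Finset.sum_add_distrib]
            exact Finset.sum_congr rfl fun i _ => (Finset.sum_add_distrib).symm
        _ = ∑ i : Fin n, ∑ j : Fin n, Real.log (A i j * A j i) := by
            refine Finset.sum_congr rfl fun i _ => Finset.sum_congr rfl fun j _ => ?_
            rw [Real.log_mul (hpos i j).ne' (hpos j i).ne']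
        _ = 0 := by simp [hrec]
    linarith
  -- the scaled matrix
  set d : Fin n → ℝ := fun i => Real.exp (-(s i) / n) with hd
  have hdpos : ∀ i, 0 < d i := fun i => Real.exp_pos _
  set B : Matrix (Fin n) (Fin n) ℝ := Matrix.of (fun i j => d i * A i j * (d j)⁻¹) with hB
  have hBpos : ∀ i j, 0 < B i j := fun i j => by
    have h1 := hdpos i; have h2 := hdpos j; have h3 := hpos i j
    simp only [hB, Matrix.of_apply]
    positivity
  have hBlog : ∀ i j, Real.log (B i j) = -(s i)/n + Real.log (A i j) + s j / n := by
    intro i j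
    simp only [hB, Matrix.of_apply]
    rw [Real.log_mul (mul_ne_zero (hdpos i).ne' (hpos i j).ne') (inv_ne_zero (hdpos j).ne'),
      Real.log_mul (hdpos i).ne' (hpos i j).ne',
      Real.log_inv, hd, Real.log_exp, Real.log_exp]
    ring
  have hBrowlog : ∀ i, ∑ j, Real.log (B i j) = 0 := by
    intro i
    calc ∑ j, Real.log (B i j) = ∑ j, (-(s i)/n + Real.log (A i j) + s j / n) := by
          exact Finset.sum_congr rfl fun j _ => hBlog i j
    _ = (∑ _j : Fin n, (-(s i)/n)) + (∑ j, Real.log (A i j)) + ∑ j, s j / n := by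
          rw [← Finset.sum_add_distrib, ← Finset.sum_add_distrib]
    _ = (n : ℝ) * (-(s i)/n) + s i + (∑ j, s j) / n := by
          rw [Finset.sum_const, Finset.card_univ, Fintype.card_fin, nsmul_eq_mul,
            ← Finset.sum_div]
    _ = 0 := by
          rw [hStot]
          field_simp
          ring
  have hBrow : ∀ i, (n:ℝ) ≤ ∑ j, B i j := by
    intro i
    have h1 : ∀ j, 1 + Real.log (B i j) ≤ B i j := fun j => by
      have h := Real.add_one_le_exp (Real.log (B i j))
      rwa [Real.exp_log (hBpos i j), add_comm] at h
    calc (n:ℝ) = ∑ j, (1 + Real.log (B i j)) := by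
          rw [Finset.sum_add_distrib, hBrowlog i, Finset.sum_const, Finset.card_univ,
            Fintype.card_fin, nsmul_eq_mul, mul_one, add_zero]
    _ ≤ ∑ j, B i j := Finset.sum_le_sum fun j _ => h1 j
  have hspecEq : specRad B = specRad A := specRad_diag_conj A d fun i => (hdpos i).ne'
  have part1 : (n:ℝ) ≤ specRad A := by
    rw [← hspecEq]
    exact row_le_specRad hn B (fun i j => (hBpos i j).le) hnR.le hBrow
  -- consistent ⇒ specRad = n
  have hcons : IsConsistent A → specRad A = n := by
    intro hc
    set Ac := A.map Complex.ofReal with hAc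
    have hAA : Ac * Ac = (n:ℂ) • Ac := by
      rw [← map_mul_ofReal]
      ext i k
      have h : (A * A) i k = n * A i k := by
        rw [Matrix.mul_apply]
        calc ∑ j, A i j * A j k = ∑ _j : Fin n, A i k :=
              Finset.sum_congr rfl fun j _ => (hc i j k).symm
        _ = n * A i k := by
              rw [Finset.sum_const, Finset.card_univ, Fintype.card_fin, nsmul_eq_mul]
      simp only [Matrix.map_apply, Matrix.smul_apply, h, smul_eq_mul]
      push_cast
      simp [hAc, Matrix.map_apply]
    have hsub : ∀ μ ∈ spectrum ℂ Ac, μ = 0 ∨ μ = (n:ℂ) := by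
      intro μ hμ
      rw [mem_spectrum_iff_det] at hμ
      obtain ⟨v, hv0, hv⟩ := Matrix.exists_mulVec_eq_zero_iff.mpr hμ
      have hAv : Ac *ᵥ v = μ • v := by
        rw [Matrix.sub_mulVec, Matrix.smul_mulVec, Matrix.one_mulVec] at hv
        exact (sub_eq_zero.mp hv).symm
      have h2 : (μ * μ) • v = ((n:ℂ) * μ) • v := by
        have l : Ac *ᵥ (Ac *ᵥ v) = (μ * μ) • v := by
          rw [hAv, Matrix.mulVec_smul, hAv, smul_smul]
        have r : Ac *ᵥ (Ac *ᵥ v) = ((n:ℂ) * μ) • v := by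
          rw [Matrix.mulVec_mulVec, hAA, Matrix.smul_mulVec, hAv, smul_smul]
        rw [← l, r]
      obtain ⟨j, hj⟩ : ∃ j, v j ≠ 0 := Function.ne_iff.mp hv0
      have h3 : (μ * μ) * v j = ((n:ℂ) * μ) * v j := by
        have := congr_fun h2 j
        simpa using this
      have h4 : μ * μ = (n:ℂ) * μ := mul_right_cancel₀ hj h3
      have h5 : μ * (μ - n) = 0 := by ring_nf; linear_combination h4
      rcases mul_eq_zero.mp h5 with h | h
      · exact Or.inl h
      · exact Or.inr (sub_eq_zero.mp h)
    have hmem : (n:ℂ) ∈ spectrum ℂ Ac := by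
      rw [mem_spectrum_iff_det, ← Matrix.exists_mulVec_eq_zero_iff]
      set i0 : Fin n := ⟨0, hn⟩ with hi0
      refine ⟨fun j => (A j i0 : ℂ), ?_, ?_⟩
      · intro h0
        have h1 := congr_fun h0 i0
        simp only [Pi.zero_apply] at h1
        have h2 : A i0 i0 = 0 := by exact_mod_cast h1
        exact (hpos i0 i0).ne' h2
      · rw [Matrix.sub_mulVec, Matrix.smul_mulVec, Matrix.one_mulVec]
        funext i
        simp only [Pi.sub_apply, Pi.smul_apply, smul_eq_mul, Pi.zero_apply]
        rw [Matrix.mulVec, dotProduct]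
        have h1 : ∑ j, Ac i j * (A j i0 : ℂ) = (n:ℝ) * A i i0 := by
          calc ∑ j, Ac i j * (A j i0 : ℂ) = ∑ _j : Fin n, (A i i0 : ℂ) := by
                refine Finset.sum_congr rfl fun j _ => ?_
                simp only [hAc, Matrix.map_apply]
                rw [← Complex.ofReal_mul, ← hc i j i0]
          _ = _ := by
                rw [Finset.sum_const, Finset.card_univ, Fintype.card_fin, nsmul_eq_mul]
                push_cast
                ring
        rw [h1]
        push_cast
        ring
    have himg : (n:ℝ) ∈ (fun z : ℂ => ‖z‖) '' spectrum ℂ Ac :=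
      ⟨(n:ℂ), hmem, by simp⟩
    refine le_antisymm (csSup_le ⟨_, himg⟩ ?_) (le_csSup (bddAbove_abs_spectrum hn A) himg)
    rintro x ⟨μ, hμ, rfl⟩
    rcases hsub μ hμ with h | h
    · simp only [h, norm_zero]
      positivity
    · simp [h]
  -- inconsistent ⇒ strict
  have hstrict : ¬ IsConsistent A → (n:ℝ) < specRad A := by
    intro hc
    have hBne : ∃ i j, B i j ≠ 1 := by
      by_contra hall
      push_neg at hall
      apply hc
      have e : ∀ p q, A p q = (d p)⁻¹ * d q := by
        intro p q
        have h := hall p q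
        simp only [hB, Matrix.of_apply] at h
        have hdp := (hdpos p).ne'
        have hdq := (hdpos q).ne'
        field_simp at h ⊢
        linarith [h]
      intro i j k
      rw [e i k, e i j, e j k]
      have hdj := (hdpos j).ne'
      field_simp
    obtain ⟨i0, j0, hne10⟩ := hBne
    have hεrow : (n:ℝ) < ∑ j, B i0 j := by
      have h1 : ∀ j ∈ Finset.univ, 1 + Real.log (B i0 j) ≤ B i0 j := fun j _ => by
        have h := Real.add_one_le_exp (Real.log (B i0 j))
        rwa [Real.exp_log (hBpos i0 j), add_comm] at h
      have h2 : 1 + Real.log (B i0 j0) < B i0 j0 := by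
        have hlogne : Real.log (B i0 j0) ≠ 0 := by
          intro h0
          have h3 := Real.exp_log (hBpos i0 j0)
          rw [h0, Real.exp_zero] at h3
          exact hne10 h3.symm
        have h := Real.add_one_lt_exp hlogne
        rwa [Real.exp_log (hBpos i0 j0), add_comm] at h
      calc (n:ℝ) = ∑ j, (1 + Real.log (B i0 j)) := by
            rw [Finset.sum_add_distrib, hBrowlog i0, Finset.sum_const, Finset.card_univ,
              Fintype.card_fin, nsmul_eq_mul, mul_one, add_zero]
      _ < ∑ j, B i0 j := Finset.sum_lt_sum h1 ⟨j0, Finset.mem_univ j0, h2⟩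
    set ε : ℝ := (∑ j, B i0 j) - n with hε
    have hεpos : 0 < ε := by rw [hε]; linarith
    have hCrow : ∀ i, (n:ℝ)*n + B i i0 * ε ≤ ∑ j, (B * B) i j := by
      intro i
      have hswap : ∑ j, (B * B) i j = ∑ l, B i l * (∑ j, B l j) := by
        simp_rw [Matrix.mul_apply]
        rw [Finset.sum_comm]
        simp_rw [← Finset.mul_sum]
      rw [hswap]
      have hsplit : ∑ l, B i l * (∑ j, B l j)
          = B i i0 * (∑ j, B i0 j) + ∑ l ∈ Finset.univ.erase i0, B i l * (∑ j, B l j) :=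
        (Finset.add_sum_erase _ _ (Finset.mem_univ i0)).symm
      have hsplit2 : ∑ l, B i l = B i i0 + ∑ l ∈ Finset.univ.erase i0, B i l :=
        (Finset.add_sum_erase _ _ (Finset.mem_univ i0)).symm
      rw [hsplit]
      have hrest : ∑ l ∈ Finset.univ.erase i0, B i l * (n:ℝ)
          ≤ ∑ l ∈ Finset.univ.erase i0, B i l * (∑ j, B l j) :=
        Finset.sum_le_sum fun l _ => mul_le_mul_of_nonneg_left (hBrow l) (hBpos i l).le
      have hBi : (n:ℝ) ≤ B i i0 + ∑ l ∈ Finset.univ.erase i0, B i l := by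
        rw [← hsplit2]; exact hBrow i
      have hBii0 : B i i0 * (∑ j, B i0 j) = B i i0 * n + B i i0 * ε := by
        rw [hε]; ring
      rw [hBii0]
      have hrest2 : (∑ l ∈ Finset.univ.erase i0, B i l) * (n:ℝ)
          ≤ ∑ l ∈ Finset.univ.erase i0, B i l * (∑ j, B l j) := by
        rw [Finset.sum_mul]; exact hrest
      nlinarith [hrest2, hBi, hnR, (hBpos i i0).le,
        Finset.sum_nonneg (fun l (_ : l ∈ Finset.univ.erase i0) => (hBpos i l).le)]
    set β : ℝ := Finset.univ.inf' Finset.univ_nonempty (fun i => B i i0) with hβ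
    have hβpos : 0 < β := by
      rw [hβ, Finset.lt_inf'_iff]
      exact fun i _ => hBpos i i0
    have hβle : ∀ i, β ≤ B i i0 := fun i => Finset.inf'_le _ (Finset.mem_univ i)
    have hr2 : ∀ i, (n:ℝ)*n + β*ε ≤ ∑ j, (B*B) i j := fun i =>
      le_trans (by nlinarith [hβle i, hεpos]) (hCrow i)
    have hBBpos : ∀ i j, 0 ≤ (B*B) i j := fun i j => by
      rw [Matrix.mul_apply]
      exact Finset.sum_nonneg fun l _ => mul_nonneg (hBpos i l).le (hBpos l j).le
    have h5 : (n:ℝ)*n + β*ε ≤ specRad (B*B) :=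
      row_le_specRad hn (B*B) hBBpos (by nlinarith) hr2
    have h6 : specRad (B*B) ≤ specRad B ^ 2 := specRad_mul_self_le hn B
    have h7 : (n:ℝ)^2 < specRad B ^ 2 := by nlinarith
    have h8 : (n:ℝ) < specRad B := lt_of_pow_lt_pow_left₀ 2 (specRad_nonneg B) h7
    rwa [hspecEq] at h8
  have hiff : specRad A = n ↔ IsConsistent A := by
    constructor
    · intro h
      by_contra hcn
      exact absurd h (ne_of_gt (hstrict hcn))
    · exact hcons
  refine ⟨part1, hiff, fun hn2 => ?_⟩
  have hden : (0:ℝ) < (n:ℝ) - 1 := by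
    have h : (2:ℝ) ≤ n := by exact_mod_cast hn2
    linarith
  constructor
  · exact div_nonneg (by linarith) hden.le
  · rw [div_eq_zero_iff]
    constructor
    · rintro (h | h)
      · exact hiff.mp (by linarith)
      · exact absurd h hden.ne'
    · intro hcn
      exact Or.inl (sub_eq_zero.mpr (hcons hcn))
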